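/- Fix a real R ≠ 0 and define G : (Fin D → ℝ) → ℝ by G x = 1 − (Σ_μ ε μ * (x μ)²)/(4R²), the metric g μ ν x := (G x)⁻² * η μ ν and its inverse gInv ν ρ x := (G x)² * (ε ν if ν = ρ else 0). Define the Christoffel symbols Γ ν μ λ x := (1/2) * Σ_ρ gInv ν ρ x * ( ∂_μ (fun y => g ρ λ y) x + ∂_λ (fun y => g ρ μ y) x − ∂_ρ (fun y => g μ λ y) x ). Then for every x with G x ≠ 0 and all μ, λ, ν : Fin D: Γ ν μ λ x = (1/(2 R² * G x)) * ( (ε μ * x μ) * (if ν = λ then 1 else 0) + (ε λ * x λ) * (if ν = μ then 1 else 0) − x ν * η μ λ ). -/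

import Mathlib

noncomputable section

/-- The flat `so(p,q)` metric sign factor. -/
def eps (p : ℕ) {D : ℕ} (m : Fin D) : ℝ := if (m : ℕ) < p then -1 else 1

/-- The flat `so(p,q)` metric. -/
def eta (p : ℕ) {D : ℕ} (m n : Fin D) : ℝ := if m = n then eps p m else 0

lemma hasFDerivG (p D : ℕ) (R : ℝ) (hR : R ≠ 0) (x : Fin D → ℝ) :
    HasFDerivAt (fun y : Fin D → ℝ => 1 - (∑ μ : Fin D, eps p μ * (y μ) ^ 2) / (4 * R ^ 2))
      (∑ i : Fin D, (-(eps p i * x i)/(2*R^2)) • (ContinuousLinearMap.proj i : (Fin D → ℝ) →L[ℝ] ℝ)) x := by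
  have h1 : HasFDerivAt (fun y : Fin D → ℝ => ∑ i : Fin D, eps p i * (y i)^2)
      (∑ i : Fin D, (2 * eps p i * x i) • (ContinuousLinearMap.proj i : (Fin D → ℝ) →L[ℝ] ℝ)) x := by
    apply HasFDerivAt.fun_sum
    intro i _
    have h := (hasDerivAt_pow 2 (x i)).comp_hasFDerivAt x
      ((ContinuousLinearMap.proj i : (Fin D → ℝ) →L[ℝ] ℝ).hasFDerivAt)
    have h2 := h.const_mul (eps p i)
    refine h2.congr_fderiv ?_
    ext v
    simp
    ring
  have h2 := ((h1.mul_const ((4*R^2)⁻¹)).const_sub 1)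
  have hfun : (fun y : Fin D → ℝ => 1 - (∑ μ : Fin D, eps p μ * (y μ) ^ 2) / (4 * R ^ 2))
      = fun y : Fin D → ℝ => 1 - (∑ i : Fin D, eps p i * (y i)^2) * (4*R^2)⁻¹ := by
    funext y; rw [div_eq_mul_inv]
  rw [hfun]
  refine h2.congr_fderiv ?_
  ext v
  simp [ContinuousLinearMap.sum_apply, Finset.sum_mul]
  rw [Finset.mul_sum, ← Finset.sum_neg_distrib]
  apply Finset.sum_congr rfl
  intro i _
  field_simp
  ring

set_option maxHeartbeats 1000000 in
theorem stmt_10 (p q : ℕ) (R : ℝ) (hR : R ≠ 0) :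
    let D := p + q
    let G : (Fin D → ℝ) → ℝ := fun x => 1 - (∑ μ : Fin D, eps p μ * (x μ) ^ 2) / (4 * R ^ 2)
    let pd : Fin D → ((Fin D → ℝ) → ℝ) → ((Fin D → ℝ) → ℝ) :=
      fun n f x => fderiv ℝ f x (Pi.single n 1)
    let g : Fin D → Fin D → (Fin D → ℝ) → ℝ :=
      fun μ ν x => ((G x) ^ 2)⁻¹ * eta p μ ν
    let gInv : Fin D → Fin D → (Fin D → ℝ) → ℝ :=
      fun ν ρ x => (G x) ^ 2 * (if ν = ρ then eps p ν else 0)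
    let Γ : Fin D → Fin D → Fin D → (Fin D → ℝ) → ℝ :=
      fun ν μ lam x => (1 / 2) * ∑ ρ : Fin D, gInv ν ρ x *
        (pd μ (fun y => g ρ lam y) x + pd lam (fun y => g ρ μ y) x
          - pd ρ (fun y => g μ lam y) x)
    ∀ x : Fin D → ℝ, G x ≠ 0 → ∀ μ lam ν : Fin D,
      Γ ν μ lam x = (1 / (2 * R ^ 2 * G x)) *
        ((eps p μ * x μ) * (if ν = lam then (1 : ℝ) else 0) +
          (eps p lam * x lam) * (if ν = μ then (1 : ℝ) else 0) - x ν * eta p μ lam) := by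
  intro D G pd g gInv Γ x hGx μ lam ν
  have hG := hasFDerivG p D R hR x
  -- derivative of (G ^ 2)⁻¹
  have hc : HasDerivAt (fun t : ℝ => (t ^ 2)⁻¹) (-(2 * G x ^ 1) / (G x ^ 2) ^ 2) (G x) :=
    (hasDerivAt_pow 2 (G x)).inv (pow_ne_zero 2 hGx)
  have hInv : HasFDerivAt (fun y => ((G y) ^ 2)⁻¹)
      ((-(2 * G x ^ 1) / (G x ^ 2) ^ 2) • (∑ i : Fin D, (-(eps p i * x i)/(2*R^2)) •
        (ContinuousLinearMap.proj i : (Fin D → ℝ) →L[ℝ] ℝ))) x :=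
    hc.comp_hasFDerivAt x hG
  -- value of pd n (g a b) x
  have key : ∀ (n a b : Fin D), pd n (fun y => g a b y) x
      = eta p a b * ((-(2 * G x ^ 1) / (G x ^ 2) ^ 2) * (-(eps p n * x n)/(2*R^2))) := by
    intro n a b
    have h := hInv.mul_const (eta p a b)
    show fderiv ℝ (fun y => ((G y) ^ 2)⁻¹ * eta p a b) x (Pi.single n 1)
      = eta p a b * _
    rw [h.fderiv]
    simp [ContinuousLinearMap.sum_apply, Pi.single_apply]
  have heps : ∀ m : Fin D, eps p m * eps p m = 1 := by
    intro m; unfold eps; split <;> norm_num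
  show (1 / 2) * ∑ ρ : Fin D, (G x) ^ 2 * (if ν = ρ then eps p ν else 0) *
      (pd μ (fun y => g ρ lam y) x + pd lam (fun y => g ρ μ y) x
        - pd ρ (fun y => g μ lam y) x) = _
  simp only [key]
  rw [Finset.sum_congr rfl (fun ρ _ => by rw [mul_ite, mul_zero, ite_mul, zero_mul])]
  rw [Finset.sum_ite_eq Finset.univ ν]
  simp only [Finset.mem_univ, if_true]
  unfold eta
  clear hG hc hInv key
  have hR2 : R ^ 2 ≠ 0 := pow_ne_zero 2 hR
  by_cases h1 : ν = lam <;> by_cases h2 : ν = μ <;> by_cases h3 : μ = lam <;>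
    subst_vars <;>
    simp only [*, if_true, ite_true, ite_false, if_neg, not_false_iff, mul_zero, zero_mul,
      sub_zero, add_zero, zero_add, pow_one] <;>
    first
      | (exact absurd rfl (by assumption))
      | (unfold eps <;> split_ifs <;> field_simp <;> ring)
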